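/- arXiv:1705.04121 — 2 statements merged into one kernel-verified Lean document; each statement's English description precedes it below -/
import Mathlib

section
/- With D = {ξ ∈ ℚ_p(i) : |ξ|_p < 1} and ξ₁ ⊕ ξ₂ := (ξ₁+ξ₂)/(1−ξ̄₁ξ₂), (D, ⊕, 0) is a left loop: for all a, b ∈ D the equation a ⊕ x = b has a unique solution x ∈ D. -/
open IsUltrametricDist

section Aux

variable {p : ℕ} [Fact p.Prime]

lemma padic_norm_one_add_sq (hp : p % 4 = 3) {t : ℚ_[p]} (ht : ‖t‖ ≤ 1) :
    ‖1 + t ^ 2‖ = 1 := by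
  set T : ℤ_[p] := ⟨t, ht⟩ with hT
  have h1 : ((1 + T ^ 2 : ℤ_[p]) : ℚ_[p]) = 1 + t ^ 2 := by push_cast [hT]; rfl
  have hle : ‖1 + t ^ 2‖ ≤ 1 := by
    rw [← h1]; exact PadicInt.norm_le_one _
  rcases lt_or_eq_of_le hle with hlt | heq
  · exfalso
    have hdvd : (p : ℤ_[p]) ∣ (1 + T ^ 2) := by
      rw [← PadicInt.norm_lt_one_iff_dvd, PadicInt.norm_def, h1]; exact hlt
    have hz : PadicInt.toZMod (1 + T ^ 2) = 0 := by
      have : (1 + T ^ 2) ∈ RingHom.ker (PadicInt.toZMod : ℤ_[p] →+* ZMod p) := by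
        rw [PadicInt.ker_toZMod, PadicInt.maximalIdeal_eq_span_p,
          Ideal.mem_span_singleton]
        exact hdvd
      exact this
    have hsq : IsSquare (-1 : ZMod p) := by
      refine ⟨PadicInt.toZMod T, ?_⟩
      have : (1 : ZMod p) + (PadicInt.toZMod T) ^ 2 = 0 := by
        simpa [map_add, map_pow] using hz
      linear_combination -this
    rw [ZMod.exists_sq_eq_neg_one_iff] at hsq
    exact hsq hp
  · exact heq

lemma padic_norm_sq_add_sq (hp : p % 4 = 3) (r s : ℚ_[p]) :
    ‖r ^ 2 + s ^ 2‖ = max ‖r‖ ‖s‖ ^ 2 := by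
  have key : ∀ r s : ℚ_[p], ‖r‖ ≤ ‖s‖ → ‖r ^ 2 + s ^ 2‖ = ‖s‖ ^ 2 := by
    intro r s hrs
    rcases eq_or_ne s 0 with rfl | hs
    · have : r = 0 := by
        simpa using le_antisymm (by simpa using hrs) (norm_nonneg r)
      simp [this]
    · have hts : ‖r / s‖ ≤ 1 := by
        rw [norm_div, div_le_one (norm_pos_iff.mpr hs)]; exact hrs
      have : r ^ 2 + s ^ 2 = s ^ 2 * (1 + (r / s) ^ 2) := by field_simp; ring
      rw [this, norm_mul, padic_norm_one_add_sq hp hts, mul_one, norm_pow]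
  rcases le_total ‖r‖ ‖s‖ with h | h
  · rw [key r s h, max_eq_right h]
  · rw [add_comm, key s r h, max_eq_left h]

end Aux

section Main

lemma qp_ultra (p : ℕ) [Fact p.Prime] (K : Type*) [NormedField K]
    [NormedAlgebra ℚ_[p] K] : IsUltrametricDist K := by
  apply isUltrametricDist_of_forall_norm_natCast_le_one
  intro n
  rw [show ((n : K)) = algebraMap ℚ_[p] K n by push_cast; rfl, norm_algebraMap']
  exact Padic.norm_int_le_one n

lemma norm_conj_eq {p : ℕ} [Fact p.Prime] {K : Type*} [NormedField K]
    [NormedAlgebra ℚ_[p] K] (hp : p % 4 = 3) (i : K) (hi : i ^ 2 = -1)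
    (hgen : Algebra.adjoin ℚ_[p] {i} = ⊤) (σ : K ≃ₐ[ℚ_[p]] K) (hσ : σ i = -i)
    (x : K) : ‖σ x‖ = ‖x‖ := by
  have := qp_ultra p K
  -- decomposition
  obtain ⟨r, s, rfl⟩ : ∃ r s : ℚ_[p],
      x = algebraMap ℚ_[p] K r + algebraMap ℚ_[p] K s * i := by
    let S : Subalgebra ℚ_[p] K :=
      { carrier := {x | ∃ r s : ℚ_[p], x = algebraMap ℚ_[p] K r + algebraMap ℚ_[p] K s * i}
        add_mem' := by
          rintro a b ⟨r, s, rfl⟩ ⟨r', s', rfl⟩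
          exact ⟨r + r', s + s', by rw [map_add, map_add]; ring⟩
        mul_mem' := by
          rintro a b ⟨r, s, rfl⟩ ⟨r', s', rfl⟩
          refine ⟨r * r' - s * s', r * s' + s * r', ?_⟩
          rw [map_sub, map_add, map_mul, map_mul, map_mul, map_mul]
          linear_combination (algebraMap ℚ_[p] K s * algebraMap ℚ_[p] K s') * hi
        algebraMap_mem' := fun r => ⟨r, 0, by simp⟩ }
    have hiS : i ∈ S := ⟨0, 1, by simp⟩
    have : Algebra.adjoin ℚ_[p] {i} ≤ S := Algebra.adjoin_le (by simpa using hiS)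
    rw [hgen] at this
    exact this (Algebra.mem_top)
  set R := algebraMap ℚ_[p] K r
  set S' := algebraMap ℚ_[p] K s
  have hni : ‖i‖ = 1 := by
    have h2 : ‖i‖ ^ 2 = 1 := by rw [← norm_pow, hi]; simp
    nlinarith [norm_nonneg i]
  have hσx : σ (R + S' * i) = R - S' * i := by
    rw [map_add, map_mul, hσ, AlgEquiv.commutes, AlgEquiv.commutes]; ring
  have hprod : (R + S' * i) * (R - S' * i) = algebraMap ℚ_[p] K (r ^ 2 + s ^ 2) := by
    rw [map_add, map_pow, map_pow]
    linear_combination (-(S' * S')) * hi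
  set M := max ‖r‖ ‖s‖ with hM
  have hnR : ‖R‖ = ‖r‖ := norm_algebraMap' K r
  have hnS : ‖S' * i‖ = ‖s‖ := by
    rw [norm_mul, hni, mul_one]; exact norm_algebraMap' K s
  have hxle : ‖R + S' * i‖ ≤ M := (norm_add_le_max _ _).trans (by rw [hnR, hnS])
  have hxle2 : ‖R - S' * i‖ ≤ M := by
    rw [sub_eq_add_neg]
    exact (norm_add_le_max _ _).trans (by rw [hnR, norm_neg, hnS])
  have hmul : ‖R + S' * i‖ * ‖R - S' * i‖ = M ^ 2 := by
    rw [← norm_mul, hprod, norm_algebraMap', padic_norm_sq_add_sq hp]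
  rw [hσx]
  have h0 : (0 : ℝ) ≤ M := le_trans (norm_nonneg r) (le_max_left _ _)
  nlinarith [norm_nonneg (R + S' * i), norm_nonneg (R - S' * i), hxle, hxle2, hmul]

end Main

/-- The Kikkawa-type loop operation `ξ₁ ⊕ ξ₂ = (ξ₁ + ξ₂)/(1 - ξ̄₁ ξ₂)` on the unit
disk of `ℚ_p(i)`, where the bar is the conjugation `σ`. -/
noncomputable def oplus {p : ℕ} [Fact p.Prime] {K : Type*} [NormedField K]
    [NormedAlgebra ℚ_[p] K] (σ : K ≃ₐ[ℚ_[p]] K) (x y : K) : K :=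
  (x + y) / (1 - σ x * y)

/-- With `D = {ξ ∈ ℚ_p(i) : |ξ|_p < 1}` and `ξ₁ ⊕ ξ₂ = (ξ₁+ξ₂)/(1-ξ̄₁ξ₂)`,
`(D, ⊕, 0)` is a left loop: for all `a, b ∈ D` the equation `a ⊕ x = b` has a
unique solution `x ∈ D`. -/
theorem oplus_left_loop
    {p : ℕ} [Fact p.Prime] (hp : p % 4 = 3)
    {K : Type*} [NormedField K] [NormedAlgebra ℚ_[p] K] [CompleteSpace K]
    (i : K) (hi : i ^ 2 = -1) (hgen : Algebra.adjoin ℚ_[p] {i} = ⊤)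
    (σ : K ≃ₐ[ℚ_[p]] K) (hσ : σ i = -i) :
    ∀ a b : K, ‖a‖ < 1 → ‖b‖ < 1 → ∃! x : K, ‖x‖ < 1 ∧ oplus σ a x = b := by
  intro a b ha hb
  have hult := qp_ultra p K
  have key1 : ∀ z : K, ‖z‖ < 1 → ‖(1 : K) + z‖ = 1 := by
    intro z hz
    rw [norm_add_eq_max_of_norm_ne_norm
      (by rw [norm_one]; exact fun h => absurd h.symm (ne_of_lt hz)),
      norm_one, max_eq_left hz.le]
  set u := σ a with hu
  have hσa : ‖u‖ < 1 := by
    rw [hu, norm_conj_eq hp i hi hgen σ hσ]; exact ha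
  have hbu : ‖b * u‖ < 1 := by
    rw [norm_mul]
    nlinarith [norm_nonneg b, norm_nonneg u]
  have hau : ‖a * u‖ < 1 := by
    rw [norm_mul]
    nlinarith [norm_nonneg a, norm_nonneg u]
  have hd1 : ‖(1 : K) + b * u‖ = 1 := key1 _ hbu
  have hd2 : ‖(1 : K) + a * u‖ = 1 := key1 _ hau
  have hne1 : (1 : K) + b * u ≠ 0 := by
    intro h; rw [h, norm_zero] at hd1; norm_num at hd1
  have hne2 : (1 : K) + a * u ≠ 0 := by
    intro h; rw [h, norm_zero] at hd2; norm_num at hd2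
  refine ⟨(b - a) / (1 + b * u), ⟨?_, ?_⟩, ?_⟩
  · rw [norm_div, hd1, div_one]
    calc ‖b - a‖ ≤ max ‖b‖ ‖a‖ := by
          rw [sub_eq_add_neg]
          simpa using norm_add_le_max b (-a)
      _ < 1 := max_lt hb ha
  · simp only [oplus, ← hu]
    have hden : (1 : K) - u * ((b - a) / (1 + b * u)) = (1 + a * u) / (1 + b * u) := by
      rw [eq_div_iff hne1, sub_mul, mul_assoc, div_mul_cancel₀ _ hne1]
      ring
    rw [hden]
    field_simp
    ring
  · rintro y ⟨hy, hoy⟩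
    have huy : ‖u * y‖ < 1 := by
      rw [norm_mul]
      nlinarith [norm_nonneg u, norm_nonneg y]
    have hney : (1 : K) - u * y ≠ 0 := by
      have h1 : ‖(1 : K) - u * y‖ = 1 := by
        rw [sub_eq_add_neg]; exact key1 _ (by rwa [norm_neg])
      intro h; rw [h, norm_zero] at h1; norm_num at h1
    simp only [oplus, ← hu] at hoy
    rw [div_eq_iff hney] at hoy
    rw [eq_div_iff hne1]
    linear_combination hoy
end

section
/- For ξ₁, ξ₂ in D = {ξ ∈ ℚ_p(i) : |ξ|_p < 1}, the inner deviation factor u := (1 − ξ₁ξ̄₂)/(1 − ξ̄₁ξ₂) satisfies ū = u^{−1} and |u|_p = 1; consequently the map ξ ↦ u·ξ is a bijection of D fixing 0, and the left loop (D, ⊕) satisfies the left inverse property λ_{ξ₁⊕ξ₂}^{−1}λ_{ξ₁}λ_{ξ₂}(ξ) = u·ξ. -/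
open IsUltrametricDist in
private lemma my_norm_one_sub {F : Type*} [NormedField F] [IsUltrametricDist F] {y : F}
    (hy : ‖y‖ < 1) : ‖1 - y‖ = 1 := by
  rw [sub_eq_add_neg,
    norm_add_eq_max_of_norm_ne_norm (by simp [norm_one]; exact (hy.ne').symm ∘ Eq.symm)]
  · simp [max_eq_left, hy.le]

private lemma my_unit_sq {p : ℕ} [Fact p.Prime] (hp : p % 4 = 3) (c : ℚ_[p]) (hc : ‖c‖ = 1) :
    ‖1 + c ^ 2‖ = 1 := by
  have hle : ‖1 + c ^ 2‖ ≤ 1 := by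
    refine (IsUltrametricDist.norm_add_le_max _ _).trans ?_
    simp [norm_pow, hc]
  refine le_antisymm hle (not_lt.mp fun h => ?_)
  set z : ℤ_[p] := ⟨c, hc.le⟩ with hz
  have hlt : ‖(1 + z ^ 2 : ℤ_[p])‖ < 1 := by
    have : ((1 + z ^ 2 : ℤ_[p]) : ℚ_[p]) = 1 + c ^ 2 := by simp only [PadicInt.coe_add, PadicInt.coe_one, PadicInt.coe_pow]; rfl
    rw [PadicInt.norm_def, this]; exact h
  have h0 : PadicInt.toZMod (1 + z ^ 2) = 0 := by
    rw [← RingHom.mem_ker, PadicInt.ker_toZMod, PadicInt.maximalIdeal_eq_span_p,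
      Ideal.mem_span_singleton]
    exact (PadicInt.norm_lt_one_iff_dvd _).mp hlt
  have hsq : (PadicInt.toZMod z) ^ 2 = -1 := by
    have h1 : (1 : ZMod p) + (PadicInt.toZMod z) ^ 2 = 0 := by simpa using h0
    linear_combination h1
  exact (ZMod.exists_sq_eq_neg_one_iff.mp ⟨PadicInt.toZMod z, by rw [← hsq]; ring⟩) hp

section Aux

variable {p : ℕ} [Fact p.Prime] {K : Type*} [NormedField K] [NormedAlgebra ℚ_[p] K]

private lemma my_exists_rep (i : K) (hi : i ^ 2 = -1) (hgen : Algebra.adjoin ℚ_[p] {i} = ⊤)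
    (x : K) : ∃ a b : ℚ_[p], x = algebraMap ℚ_[p] K a + algebraMap ℚ_[p] K b * i := by
  let A : Subalgebra ℚ_[p] K :=
  { carrier := {x | ∃ a b : ℚ_[p], x = algebraMap ℚ_[p] K a + algebraMap ℚ_[p] K b * i}
    mul_mem' := by
      rintro x y ⟨a, b, rfl⟩ ⟨c, d, rfl⟩
      exact ⟨a * c - b * d, a * d + b * c, by
        simp only [map_sub, map_add, map_mul]
        linear_combination (algebraMap ℚ_[p] K b * algebraMap ℚ_[p] K d) * hi⟩
    add_mem' := by
      rintro x y ⟨a, b, rfl⟩ ⟨c, d, rfl⟩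
      exact ⟨a + c, b + d, by rw [map_add, map_add]; ring⟩
    algebraMap_mem' := fun r => ⟨r, 0, by simp⟩ }
  have hiA : i ∈ A := ⟨0, 1, by simp⟩
  have hle : Algebra.adjoin ℚ_[p] {i} ≤ A := Algebra.adjoin_le (by simpa using hiA)
  rw [hgen] at hle
  exact hle (Algebra.mem_top (R := ℚ_[p]) (A := K))

private lemma my_norm_i (i : K) (hi : i ^ 2 = -1) : ‖i‖ = 1 := by
  have h : ‖i‖ ^ 2 = 1 := by rw [← norm_pow, hi]; simp
  nlinarith [norm_nonneg i]

private lemma my_unit_sq' (hp : p % 4 = 3) (c : ℚ_[p]) (hc : ‖c‖ ≤ 1) : ‖1 + c ^ 2‖ = 1 := by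
  rcases eq_or_lt_of_le hc with h | h
  · exact my_unit_sq hp c h
  · have : ‖c ^ 2‖ < 1 := by
      rw [norm_pow]; nlinarith [norm_nonneg c]
    simpa [sub_neg_eq_add] using my_norm_one_sub (y := -(c ^ 2)) (by simpa)

private lemma my_norm_one_add_mul (hp : p % 4 = 3) (i : K) (hi : i ^ 2 = -1)
    (c : ℚ_[p]) (hc : ‖c‖ ≤ 1) : ‖1 + algebraMap ℚ_[p] K c * i‖ = 1 := by
  haveI : IsUltrametricDist K := IsUltrametricDist.of_normedAlgebra ℚ_[p]
  set C := algebraMap ℚ_[p] K c with hC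
  have hCn : ‖C‖ = ‖c‖ := norm_algebraMap' K c
  have hprod : (1 + C * i) * (1 - C * i) = algebraMap ℚ_[p] K (1 + c ^ 2) := by
    rw [map_add, map_one, map_pow]
    linear_combination (- (C * C)) * hi
  have hpn : ‖(1 + C * i) * (1 - C * i)‖ = 1 := by
    rw [hprod, norm_algebraMap' K _, my_unit_sq' hp c hc]
  have hle1 : ‖1 + C * i‖ ≤ 1 := by
    refine (IsUltrametricDist.norm_add_le_max _ _).trans ?_
    simp [norm_mul, hCn, my_norm_i i hi, hc]
  have hle2 : ‖1 - C * i‖ ≤ 1 := by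
    rw [sub_eq_add_neg]
    refine (IsUltrametricDist.norm_add_le_max _ _).trans ?_
    simp [norm_mul, hCn, my_norm_i i hi, hc]
  rw [norm_mul] at hpn
  nlinarith [norm_nonneg (1 + C * i), norm_nonneg (1 - C * i)]

private lemma my_norm_rep (hp : p % 4 = 3) (i : K) (hi : i ^ 2 = -1) (a b : ℚ_[p]) :
    ‖algebraMap ℚ_[p] K a + algebraMap ℚ_[p] K b * i‖ = max ‖a‖ ‖b‖ := by
  haveI : IsUltrametricDist K := IsUltrametricDist.of_normedAlgebra ℚ_[p]
  have hni : ‖i‖ = 1 := my_norm_i i hi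
  rcases eq_or_ne b 0 with rfl | hb
  · simp [norm_algebraMap' K a]
  rcases le_or_gt ‖a‖ ‖b‖ with hab | hab
  · have key : algebraMap ℚ_[p] K a + algebraMap ℚ_[p] K b * i
        = algebraMap ℚ_[p] K b * (i * (1 + algebraMap ℚ_[p] K (-(a/b)) * i)) := by
      have hbK : algebraMap ℚ_[p] K b ≠ 0 := by simpa using hb
      rw [map_neg, map_div₀]
      field_simp
      linear_combination (algebraMap ℚ_[p] K a) * hi
    rw [key, norm_mul, norm_mul, hni,
      my_norm_one_add_mul hp i hi _
        (by rw [norm_neg, norm_div]; exact div_le_one_of_le₀ hab (norm_nonneg b)),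
      norm_algebraMap' K b]
    rw [max_eq_right hab]; ring
  · have ha : a ≠ 0 := by
      intro h; rw [h, norm_zero] at hab; exact absurd hab (not_lt.mpr (norm_nonneg b))
    have key : algebraMap ℚ_[p] K a + algebraMap ℚ_[p] K b * i
        = algebraMap ℚ_[p] K a * (1 + algebraMap ℚ_[p] K (b/a) * i) := by
      have haK : algebraMap ℚ_[p] K a ≠ 0 := by simpa using ha
      rw [map_div₀]; field_simp
    rw [key, norm_mul,
      my_norm_one_add_mul hp i hi _
        (by rw [norm_div]; exact div_le_one_of_le₀ hab.le (norm_nonneg a)),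
      norm_algebraMap' K a, max_eq_left hab.le]; ring

end Aux

/-- For `ξ₁, ξ₂` in `D = {ξ ∈ ℚ_p(i) : |ξ|_p < 1}`, the inner deviation factor
`u = (1 - ξ₁ ξ̄₂)/(1 - ξ̄₁ ξ₂)` satisfies `ū = u⁻¹` and `|u|_p = 1`; consequently
`ξ ↦ u·ξ` is a bijection of `D` fixing `0`, and the left loop `(D, ⊕)` satisfies
`λ_{ξ₁⊕ξ₂}⁻¹ λ_{ξ₁} λ_{ξ₂} (ξ) = u·ξ`, i.e.
`ξ₁ ⊕ (ξ₂ ⊕ ξ) = (ξ₁ ⊕ ξ₂) ⊕ (u·ξ)`. -/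
theorem oplus_inner_deviation
    {p : ℕ} [Fact p.Prime] (hp : p % 4 = 3)
    {K : Type*} [NormedField K] [NormedAlgebra ℚ_[p] K] [CompleteSpace K]
    (i : K) (hi : i ^ 2 = -1) (hgen : Algebra.adjoin ℚ_[p] {i} = ⊤)
    (σ : K ≃ₐ[ℚ_[p]] K) (hσ : σ i = -i)
    (ξ₁ ξ₂ : K) (h₁ : ‖ξ₁‖ < 1) (h₂ : ‖ξ₂‖ < 1) :
    σ ((1 - ξ₁ * σ ξ₂) / (1 - σ ξ₁ * ξ₂)) = ((1 - ξ₁ * σ ξ₂) / (1 - σ ξ₁ * ξ₂))⁻¹ ∧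
    ‖(1 - ξ₁ * σ ξ₂) / (1 - σ ξ₁ * ξ₂)‖ = 1 ∧
    Set.BijOn (fun ξ : K => ((1 - ξ₁ * σ ξ₂) / (1 - σ ξ₁ * ξ₂)) * ξ)
      {ξ : K | ‖ξ‖ < 1} {ξ : K | ‖ξ‖ < 1} ∧
    ((1 - ξ₁ * σ ξ₂) / (1 - σ ξ₁ * ξ₂)) * 0 = 0 ∧
    (∀ ξ : K, ‖ξ‖ < 1 →
      oplus σ ξ₁ (oplus σ ξ₂ ξ) =
        oplus σ (oplus σ ξ₁ ξ₂) (((1 - ξ₁ * σ ξ₂) / (1 - σ ξ₁ * ξ₂)) * ξ)) := by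
  haveI : IsUltrametricDist K := IsUltrametricDist.of_normedAlgebra ℚ_[p]
  have hσnorm : ∀ x : K, ‖σ x‖ = ‖x‖ := by
    intro x
    obtain ⟨a, b, rfl⟩ := my_exists_rep i hi hgen x
    rw [map_add, map_mul, AlgEquiv.commutes, AlgEquiv.commutes, hσ]
    have hrw : algebraMap ℚ_[p] K a + algebraMap ℚ_[p] K b * -i
        = algebraMap ℚ_[p] K a + algebraMap ℚ_[p] K (-b) * i := by rw [map_neg]; ring
    rw [hrw, my_norm_rep hp i hi, my_norm_rep hp i hi, norm_neg]
  have hσσ : ∀ x : K, σ (σ x) = x := by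
    intro x
    obtain ⟨a, b, rfl⟩ := my_exists_rep i hi hgen x
    simp [map_add, map_mul, AlgEquiv.commutes, hσ]
  have small : ∀ x y : K, ‖x‖ < 1 → ‖y‖ < 1 → ‖1 - x * y‖ = 1 := fun x y hx hy =>
    my_norm_one_sub (by rw [norm_mul]; nlinarith [norm_nonneg x, norm_nonneg y])
  have h₁' : ‖σ ξ₁‖ < 1 := by rw [hσnorm]; exact h₁
  have h₂' : ‖σ ξ₂‖ < 1 := by rw [hσnorm]; exact h₂
  have hnn : ‖1 - ξ₁ * σ ξ₂‖ = 1 := small _ _ h₁ h₂'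
  have hdn : ‖1 - σ ξ₁ * ξ₂‖ = 1 := small _ _ h₁' h₂
  have hn0 : 1 - ξ₁ * σ ξ₂ ≠ 0 := fun h => by rw [h] at hnn; simp at hnn
  have hd0 : 1 - σ ξ₁ * ξ₂ ≠ 0 := fun h => by rw [h] at hdn; simp at hdn
  have hun : ‖(1 - ξ₁ * σ ξ₂) / (1 - σ ξ₁ * ξ₂)‖ = 1 := by
    rw [norm_div, hnn, hdn]; norm_num
  have hu0 : (1 - ξ₁ * σ ξ₂) / (1 - σ ξ₁ * ξ₂) ≠ 0 := div_ne_zero hn0 hd0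
  have hσn : σ (1 - ξ₁ * σ ξ₂) = 1 - σ ξ₁ * ξ₂ := by
    rw [map_sub, map_one, map_mul, hσσ]
  have hσd : σ (1 - σ ξ₁ * ξ₂) = 1 - ξ₁ * σ ξ₂ := by
    rw [map_sub, map_one, map_mul, hσσ]
  refine ⟨?_, hun, ⟨?_, ?_, ?_⟩, mul_zero _, ?_⟩
  · rw [map_div₀, hσn, hσd, inv_div]
  · intro ξ hξ
    show ‖(1 - ξ₁ * σ ξ₂) / (1 - σ ξ₁ * ξ₂) * ξ‖ < 1
    rw [norm_mul, hun, one_mul]; exact hξ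
  · intro x _ y _ hxy
    exact mul_left_cancel₀ hu0 hxy
  · intro y hy
    refine ⟨((1 - ξ₁ * σ ξ₂) / (1 - σ ξ₁ * ξ₂))⁻¹ * y, ?_, ?_⟩
    · show ‖((1 - ξ₁ * σ ξ₂) / (1 - σ ξ₁ * ξ₂))⁻¹ * y‖ < 1
      rw [norm_mul, norm_inv, hun, inv_one, one_mul]; exact hy
    · show (1 - ξ₁ * σ ξ₂) / (1 - σ ξ₁ * ξ₂) * (((1 - ξ₁ * σ ξ₂) / (1 - σ ξ₁ * ξ₂))⁻¹ * y) = y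
      rw [← mul_assoc, mul_inv_cancel₀ hu0, one_mul]
  · intro ξ hξ
    have he : ‖1 - σ ξ₂ * ξ‖ = 1 := small _ _ h₂' hξ
    have he0 : (1 : K) - σ ξ₂ * ξ ≠ 0 := fun h => by rw [h] at he; simp at he
    have hw : ‖oplus σ ξ₂ ξ‖ < 1 := by
      simp only [oplus]
      rw [norm_div, he, div_one]
      exact lt_of_le_of_lt (IsUltrametricDist.norm_add_le_max _ _) (max_lt h₂ hξ)
    have hf0 : 1 - σ ξ₁ * oplus σ ξ₂ ξ ≠ 0 := by
      have := small _ _ h₁' hw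
      exact fun h => by rw [h] at this; simp at this
    have hs : ‖oplus σ ξ₁ ξ₂‖ < 1 := by
      simp only [oplus]
      rw [norm_div, hdn, div_one]
      exact lt_of_le_of_lt (IsUltrametricDist.norm_add_le_max _ _) (max_lt h₁ h₂)
    have hσs : ‖σ (oplus σ ξ₁ ξ₂)‖ < 1 := by rw [hσnorm]; exact hs
    have huξ : ‖(1 - ξ₁ * σ ξ₂) / (1 - σ ξ₁ * ξ₂) * ξ‖ < 1 := by
      rw [norm_mul, hun, one_mul]; exact hξ
    have hg0 : 1 - σ (oplus σ ξ₁ ξ₂) * ((1 - ξ₁ * σ ξ₂) / (1 - σ ξ₁ * ξ₂) * ξ) ≠ 0 := by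
      have := small _ _ hσs huξ
      exact fun h => by rw [h] at this; simp at this
    have hσsval : σ (oplus σ ξ₁ ξ₂) = (σ ξ₁ + σ ξ₂) / (1 - ξ₁ * σ ξ₂) := by
      simp only [oplus]
      rw [map_div₀, map_add, hσd]
    simp only [oplus] at hf0 hg0 hσsval ⊢
    rw [hσsval] at hg0 ⊢
    rw [div_eq_div_iff hf0 hg0]
    have hd0' : 1 - ξ₂ * σ ξ₁ ≠ 0 := by rwa [mul_comm]
    have he0' : 1 - ξ * σ ξ₂ ≠ 0 := by rwa [mul_comm]
    field_simp
    ring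
end
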